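/- Ehrling's Lemma: Let V₀, V, V₁ be real Banach spaces with V₀ ⊂ V ⊂ V₁ such that the embedding of V₀ into V is compact and the embedding of V into V₁ is continuous. Then for every ε > 0 there exists a constant c(ε) > 0 such that ‖v‖_V ≤ ε‖v‖_{V₀} + c(ε)‖v‖_{V₁} for all v ∈ V₀. -/

import Mathlib

open Filter Topology

noncomputable section

/-- A (not necessarily linear) map is compact if it maps bounded sets of the domain to
relatively compact sets of the codomain. -/
def MapsBoundedToRelCompact {X Y : Type*} [NormedAddCommGroup X] [NormedAddCommGroup Y]
    (f : X → Y) : Prop :=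
  ∀ s : Set X, Bornology.IsBounded s → IsCompact (closure (f '' s))

/-- **Ehrling's Lemma.** Let `V₀ ⊂ V ⊂ V₁` be real Banach spaces, the embedding `V₀ ↪ V`
(realized as the injective continuous linear map `e₀`) being compact and the embedding
`V ↪ V₁` (realized as the injective continuous linear map `e₁`) being continuous. Then for
every `ε > 0` there exists `c(ε) > 0` such that `‖v‖_V ≤ ε ‖v‖_{V₀} + c(ε) ‖v‖_{V₁}` for all
`v ∈ V₀`. -/
theorem ehrling_lemma
    {V₀ V V₁ : Type*}
    [NormedAddCommGroup V₀] [NormedSpace ℝ V₀] [CompleteSpace V₀]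
    [NormedAddCommGroup V] [NormedSpace ℝ V] [CompleteSpace V]
    [NormedAddCommGroup V₁] [NormedSpace ℝ V₁] [CompleteSpace V₁]
    (e₀ : V₀ →L[ℝ] V) (he₀_inj : Function.Injective e₀)
    (he₀_cpt : MapsBoundedToRelCompact e₀)
    (e₁ : V →L[ℝ] V₁) (he₁_inj : Function.Injective e₁) :
    ∀ ε > (0 : ℝ), ∃ c > (0 : ℝ), ∀ v : V₀,
      ‖e₀ v‖ ≤ ε * ‖v‖ + c * ‖e₁ (e₀ v)‖ := by
  intro ε hε
  by_contra hcon
  push_neg at hcon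
  -- for each n, get a counterexample for c = n+1
  have hseq : ∀ n : ℕ, ∃ v : V₀, ε * ‖v‖ + (n + 1 : ℝ) * ‖e₁ (e₀ v)‖ < ‖e₀ v‖ := by
    intro n
    obtain ⟨v, hv⟩ := hcon (n + 1 : ℝ) (by positivity)
    exact ⟨v, by linarith⟩
  choose v hv using hseq
  -- each v n is nonzero
  have hvne : ∀ n, v n ≠ 0 := by
    intro n hn
    have := hv n
    rw [hn] at this
    simp at this
  have hnorm_pos : ∀ n, (0 : ℝ) < ‖e₀ (v n)‖ := by
    intro n
    have : e₀ (v n) ≠ 0 := by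
      intro h
      exact hvne n (he₀_inj (by simpa using h))
    exact norm_pos_iff.mpr this
  -- normalize
  set u : ℕ → V₀ := fun n => (‖e₀ (v n)‖)⁻¹ • v n with hu
  have hu_norm : ∀ n, ‖e₀ (u n)‖ = 1 := by
    intro n
    simp only [hu, map_smul, norm_smul, norm_inv, Real.norm_eq_abs,
      abs_of_pos (hnorm_pos n)]
    exact inv_mul_cancel₀ (hnorm_pos n).ne'
  have hu_ineq : ∀ n, ε * ‖u n‖ + (n + 1 : ℝ) * ‖e₁ (e₀ (u n))‖ < 1 := by
    intro n
    have h := hv n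
    have hp := hnorm_pos n
    have h1 : ‖u n‖ = (‖e₀ (v n)‖)⁻¹ * ‖v n‖ := by
      simp [hu, norm_smul, abs_of_pos hp]
    have h2 : ‖e₁ (e₀ (u n))‖ = (‖e₀ (v n)‖)⁻¹ * ‖e₁ (e₀ (v n))‖ := by
      simp [hu, map_smul, norm_smul, abs_of_pos hp]
    rw [h1, h2]
    calc ε * ((‖e₀ (v n)‖)⁻¹ * ‖v n‖) + (n + 1 : ℝ) * ((‖e₀ (v n)‖)⁻¹ * ‖e₁ (e₀ (v n))‖)
        = (ε * ‖v n‖ + (n + 1 : ℝ) * ‖e₁ (e₀ (v n))‖) / ‖e₀ (v n)‖ := by ring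
      _ < 1 := (div_lt_one hp).mpr h
  -- u is bounded
  have hu_bdd : ∀ n, ‖u n‖ ≤ ε⁻¹ := by
    intro n
    have h := hu_ineq n
    have h1 : (0:ℝ) ≤ (n + 1 : ℝ) * ‖e₁ (e₀ (u n))‖ := by positivity
    have : ε * ‖u n‖ ≤ 1 := by linarith
    rw [← le_div_iff₀' hε] at this
    simpa [one_div] using this
  -- image under e₀ lies in a compact set
  have hball : Bornology.IsBounded (Metric.closedBall (0 : V₀) ε⁻¹) :=
    Metric.isBounded_closedBall
  have hK : IsCompact (closure (e₀ '' Metric.closedBall (0 : V₀) ε⁻¹)) :=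
    he₀_cpt _ hball
  have hmem : ∀ n, e₀ (u n) ∈ closure (e₀ '' Metric.closedBall (0 : V₀) ε⁻¹) := by
    intro n
    apply subset_closure
    exact ⟨u n, by simpa [Metric.mem_closedBall] using hu_bdd n, rfl⟩
  obtain ⟨w, hw_mem, φ, hφ_mono, hφ_tendsto⟩ := hK.tendsto_subseq hmem
  -- ‖w‖ = 1
  have hw_norm : ‖w‖ = 1 := by
    have : Tendsto (fun n => ‖e₀ (u (φ n))‖) atTop (𝓝 ‖w‖) :=
      (continuous_norm.tendsto w).comp hφ_tendsto
    have h2 : Tendsto (fun _ : ℕ => (1 : ℝ)) atTop (𝓝 ‖w‖) := by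
      simpa [hu_norm] using this
    exact (tendsto_nhds_unique h2 tendsto_const_nhds)
  -- e₁ w = 0
  have h_tendsto0 : Tendsto (fun n => e₁ (e₀ (u (φ n)))) atTop (𝓝 0) := by
    rw [tendsto_iff_norm_sub_tendsto_zero]
    simp only [sub_zero]
    refine squeeze_zero (g := fun n => 1 / (φ n + 1 : ℝ)) (fun n => norm_nonneg _)
      (fun n => ?_) ?_
    · have h := hu_ineq (φ n)
      have h1 : (0:ℝ) ≤ ε * ‖u (φ n)‖ := by positivity
      have h2 : (φ n + 1 : ℝ) * ‖e₁ (e₀ (u (φ n)))‖ < 1 := by linarith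
      have hp : (0:ℝ) < (φ n + 1 : ℝ) := by positivity
      rw [le_div_iff₀ hp]
      nlinarith
    · have : Tendsto (fun n : ℕ => (n : ℝ) + 1) atTop atTop :=
        tendsto_atTop_add_const_right _ 1 tendsto_natCast_atTop_atTop
      have hφ : Tendsto (fun n => (φ n : ℝ) + 1) atTop atTop :=
        this.comp hφ_mono.tendsto_atTop
      convert tendsto_inv_atTop_zero.comp hφ using 2
      simp [one_div]
  have h_tendsto_w : Tendsto (fun n => e₁ (e₀ (u (φ n)))) atTop (𝓝 (e₁ w)) :=
    (e₁.continuous.tendsto w).comp hφ_tendsto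
  have he₁w : e₁ w = 0 := tendsto_nhds_unique h_tendsto_w h_tendsto0
  have : w = 0 := he₁_inj (by simpa using he₁w)
  rw [this, norm_zero] at hw_norm
  norm_num at hw_norm
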